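/- Cantor's bijection f = (f_1, f_2) is a homeomorphism from I onto I², where I carries the Euclidean topology and I² the product topology. -/

import Mathlib

open Filter Finset MeasureTheory
open Topology

/-- `qden a n` is the denominator `q_n` of the continued fraction with partial
quotients `a_1 = a 0, a_2 = a 1, …` (0-indexed sequence `a`), defined by
`q_0 = 1`, `q_1 = a_1`, `q_n = a_n q_{n-1} + q_{n-2}`. -/
def qden (a : ℕ → ℕ+) : ℕ → ℕ
  | 0 => 1
  | 1 => a 0
  | (n+2) => (a (n+1) : ℕ) * qden a (n+1) + qden a n

/-- `pnum a n` is the numerator `p_n`, defined by `p_0 = 0`, `p_1 = 1`,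
`p_n = a_n p_{n-1} + p_{n-2}`. -/
def pnum (a : ℕ → ℕ+) : ℕ → ℕ
  | 0 => 0
  | 1 => 1
  | (n+2) => (a (n+1) : ℕ) * pnum a (n+1) + pnum a n

/-- The value `[a_1, a_2, …]` of the infinite continued fraction with partial quotients
`a_1 = a 0, a_2 = a 1, …`, i.e. the limit of the convergents `p_n / q_n` (which always
exists). -/
noncomputable def cfVal (a : ℕ → ℕ+) : ℝ :=
  limUnder atTop (fun n => (pnum a n : ℝ) / (qden a n : ℝ))

lemma qden_pos (a : ℕ → ℕ+) : ∀ n, 0 < qden a n := by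
  intro n
  induction n using Nat.twoStepInduction with
  | zero => simp [qden]
  | one => simp [qden]
  | more n ih1 ih2 => simp only [qden]; positivity

lemma le_qden (a : ℕ → ℕ+) : ∀ n, n ≤ qden a n := by
  intro n
  induction n using Nat.twoStepInduction with
  | zero => simp [qden]
  | one => exact (a 0).one_le
  | more n ih1 ih2 =>
    have h1 := qden_pos a n
    have h2 : 1 * qden a (n+1) ≤ (a (n+1) : ℕ) * qden a (n+1) :=
      Nat.mul_le_mul_right _ (a (n+1)).one_le
    simp only [qden]; omega

lemma det_eq (a : ℕ → ℕ+) : ∀ n,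
    (pnum a (n+1) : ℤ) * qden a n - pnum a n * qden a (n+1) = (-1)^n := by
  intro n
  induction n with
  | zero => simp [pnum, qden]
  | succ n ih =>
    simp only [pnum, qden] at *
    push_cast at *
    ring_nf
    ring_nf at ih
    linarith [ih]

noncomputable def cnv (a : ℕ → ℕ+) (n : ℕ) : ℝ := (pnum a n : ℝ) / (qden a n : ℝ)

lemma qdenR_pos (a : ℕ → ℕ+) (n : ℕ) : (0:ℝ) < qden a n := by
  exact_mod_cast qden_pos a n

lemma cnv_diff (a : ℕ → ℕ+) (n : ℕ) :
    cnv a (n+1) - cnv a n = (-1)^n / ((qden a n : ℝ) * qden a (n+1)) := by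
  have h1 := qdenR_pos a n
  have h2 := qdenR_pos a (n+1)
  have hd : (pnum a (n+1) : ℝ) * qden a n - pnum a n * qden a (n+1) = (-1)^n := by
    exact_mod_cast det_eq a n
  rw [cnv, cnv]
  field_simp
  linear_combination hd

lemma qden_lt (a : ℕ → ℕ+) (n : ℕ) : qden a n < qden a (n+2) := by
  have h1 := qden_pos a (n+1)
  have h2 : 1 * qden a (n+1) ≤ (a (n+1) : ℕ) * qden a (n+1) :=
    Nat.mul_le_mul_right _ (a (n+1)).one_le
  simp only [qden]; omega

lemma dist_cnv_succ (a : ℕ → ℕ+) (n : ℕ) :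
    dist (cnv a n) (cnv a (n+1)) = 1 / ((qden a n : ℝ) * qden a (n+1)) := by
  rw [Real.dist_eq, abs_sub_comm, cnv_diff, abs_div]
  simp [abs_of_pos (mul_pos (qdenR_pos a n) (qdenR_pos a (n+1)))]

lemma cnv_mem_uIcc (a : ℕ → ℕ+) (n : ℕ) :
    cnv a (n+2) ∈ Set.uIcc (cnv a n) (cnv a (n+1)) := by
  have h1 := qdenR_pos a n
  have h2 := qdenR_pos a (n+1)
  have h3 := qdenR_pos a (n+2)
  have hlt : (qden a n : ℝ) < qden a (n+2) := by exact_mod_cast qden_lt a n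
  have e1 := cnv_diff a n
  have e2 : cnv a (n+2) - cnv a (n+1) = (-1)^(n+1) / ((qden a (n+1) : ℝ) * qden a (n+2)) := by
    have := cnv_diff a (n+1); convert this using 3 <;> omega
  have hA : 1/((qden a (n+1):ℝ) * qden a (n+2)) ≤ 1/((qden a n:ℝ)*qden a (n+1)) := by
    apply one_div_le_one_div_of_le (by positivity)
    nlinarith
  have hp1 : (0:ℝ) < 1/((qden a n:ℝ)*qden a (n+1)) := by positivity
  have hp2 : (0:ℝ) < 1/((qden a (n+1):ℝ)*qden a (n+2)) := by positivity
  rcases Nat.even_or_odd n with he | ho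
  · rw [he.neg_one_pow] at e1
    rw [(he.add_one).neg_one_pow, neg_div] at e2
    rw [Set.mem_uIcc]; left
    constructor <;> linarith
  · rw [ho.neg_one_pow, neg_div] at e1
    rw [(ho.add_one).neg_one_pow] at e2
    rw [Set.mem_uIcc]; right
    constructor <;> linarith

lemma uIcc_nested (a : ℕ → ℕ+) (n : ℕ) :
    Set.uIcc (cnv a (n+1)) (cnv a (n+2)) ⊆ Set.uIcc (cnv a n) (cnv a (n+1)) := by
  apply Set.uIcc_subset_uIcc (Set.right_mem_uIcc) (cnv_mem_uIcc a n)

lemma cnv_mem_of_le (a : ℕ → ℕ+) {n m : ℕ} (h : n ≤ m) :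
    cnv a m ∈ Set.uIcc (cnv a n) (cnv a (n+1)) := by
  induction m with
  | zero =>
    have : n = 0 := Nat.le_zero.mp h
    subst this; exact Set.left_mem_uIcc
  | succ m ih =>
    rcases Nat.lt_or_ge n (m+1) with hlt | hge
    · have hnm : n ≤ m := Nat.lt_succ_iff.mp hlt
      -- cnv (m+1) ∈ uIcc (cnv m) (cnv (m+1)); and show uIcc (cnv m) (cnv (m+1)) ⊆ uIcc n (n+1)
      have key : ∀ k, Set.uIcc (cnv a (n+k)) (cnv a (n+k+1)) ⊆ Set.uIcc (cnv a n) (cnv a (n+1)) := by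
        intro k
        induction k with
        | zero => exact subset_rfl
        | succ k ihk => exact (uIcc_nested a (n+k)).trans ihk
      have := key (m - n)
      rw [show n + (m-n) = m by omega] at this
      exact this Set.right_mem_uIcc
    · have : n = m+1 := by omega
      subst this; exact Set.left_mem_uIcc

lemma dist_cnv_le (a : ℕ → ℕ+) {n m k : ℕ} (hm : n ≤ m) (hk : n ≤ k) :
    dist (cnv a m) (cnv a k) ≤ 1 / ((qden a n : ℝ) * qden a (n+1)) := by
  rw [← dist_cnv_succ a n]
  exact Real.dist_le_of_mem_uIcc (cnv_mem_of_le a hm) (cnv_mem_of_le a hk)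

lemma one_div_qq_le (a : ℕ → ℕ+) (n : ℕ) :
    1 / ((qden a n : ℝ) * qden a (n+1)) ≤ 1 / (n+1 : ℝ) := by
  apply one_div_le_one_div_of_le (by positivity)
  have h1 : (1:ℝ) ≤ qden a n := by exact_mod_cast qden_pos a n
  have h2 : ((n:ℝ)+1) ≤ qden a (n+1) := by exact_mod_cast le_qden a (n+1)
  nlinarith

lemma cauchy_cnv (a : ℕ → ℕ+) : CauchySeq (cnv a) := by
  rw [Metric.cauchySeq_iff']
  intro ε hε
  obtain ⟨N, hN⟩ := exists_nat_gt (1/ε)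
  refine ⟨N, fun m hm => ?_⟩
  calc dist (cnv a m) (cnv a N) ≤ 1 / ((qden a N : ℝ) * qden a (N+1)) :=
        dist_cnv_le a hm le_rfl
    _ ≤ 1 / (N+1 : ℝ) := one_div_qq_le a N
    _ < ε := by
        rw [div_lt_iff₀ (by positivity)]
        rw [div_lt_iff₀ hε] at hN
        nlinarith

lemma tendsto_cnv (a : ℕ → ℕ+) : Tendsto (cnv a) atTop (𝓝 (cfVal a)) :=
  (cauchy_cnv a).tendsto_limUnder

lemma cfVal_mem_uIcc (a : ℕ → ℕ+) (n : ℕ) :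
    cfVal a ∈ Set.uIcc (cnv a n) (cnv a (n+1)) := by
  apply IsClosed.mem_of_tendsto (s := Set.uIcc _ _) isClosed_Icc (tendsto_cnv a)
  filter_upwards [eventually_ge_atTop n] with m hm
  exact cnv_mem_of_le a hm

lemma dist_cfVal_cnv (a : ℕ → ℕ+) (n : ℕ) :
    dist (cfVal a) (cnv a n) ≤ 1 / ((qden a n : ℝ) * qden a (n+1)) := by
  rw [← dist_cnv_succ a n]
  exact Real.dist_le_of_mem_uIcc (cfVal_mem_uIcc a n) Set.left_mem_uIcc

def shf (a : ℕ → ℕ+) : ℕ → ℕ+ := fun n => a (n+1)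

lemma pnum_shf (a : ℕ → ℕ+) : ∀ n, pnum a (n+1) = qden (shf a) n := by
  intro n
  induction n using Nat.twoStepInduction with
  | zero => simp [pnum, qden]
  | one => simp [pnum, qden, shf]
  | more n ih1 ih2 =>
    have e1 : pnum a (n+2+1) = (a (n+2) : ℕ) * pnum a (n+2) + pnum a (n+1) := rfl
    have e2 : qden (shf a) (n+2) = (shf a (n+1) : ℕ) * qden (shf a) (n+1) + qden (shf a) n := rfl
    rw [e1, e2, ih1, ih2]
    simp [shf]

lemma qden_shf (a : ℕ → ℕ+) : ∀ n, qden a (n+1) = (a 0 : ℕ) * qden (shf a) n + pnum (shf a) n := by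
  intro n
  induction n using Nat.twoStepInduction with
  | zero => simp [pnum, qden]
  | one => simp [pnum, qden, shf]; ring
  | more n ih1 ih2 =>
    have e1 : qden a (n+1+1+1) = (a (n+2) : ℕ) * qden a (n+2) + qden a (n+1) := rfl
    have e2 : qden (shf a) (n+2) = (shf a (n+1) : ℕ) * qden (shf a) (n+1) + qden (shf a) n := rfl
    have e3 : pnum (shf a) (n+2) = (shf a (n+1) : ℕ) * pnum (shf a) (n+1) + pnum (shf a) n := rfl
    rw [e1, e2, e3, ih1, ih2]
    simp only [shf]
    ring

lemma cnv_shf (a : ℕ → ℕ+) (n : ℕ) :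
    cnv a (n+1) = 1 / ((a 0 : ℝ) + cnv (shf a) n) := by
  have hq := qdenR_pos (shf a) n
  have hp : (0:ℝ) ≤ pnum (shf a) n := by positivity
  have ha : (0:ℝ) < (a 0 : ℕ) := by exact_mod_cast (a 0).pos
  rw [cnv, cnv, pnum_shf a n, qden_shf a n]
  push_cast
  rw [div_eq_div_iff (by positivity) (by positivity)]
  field_simp

lemma cfVal_nonneg_le_one (a : ℕ → ℕ+) : cfVal a ∈ Set.Icc (0:ℝ) (1/(a 0 : ℝ)) := by
  have := cfVal_mem_uIcc a 0
  have h0 : cnv a 0 = 0 := by simp [cnv, pnum, qden]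
  have h1 : cnv a 1 = 1/(a 0 : ℝ) := by simp [cnv, pnum, qden]
  rw [h0, h1, Set.uIcc_of_le (by positivity)] at this
  exact this

lemma cfVal_rec (a : ℕ → ℕ+) : cfVal a = 1 / ((a 0 : ℝ) + cfVal (shf a)) := by
  have hpos : (0:ℝ) < (a 0 : ℝ) + cfVal (shf a) := by
    have h := (cfVal_nonneg_le_one (shf a)).1
    have ha : (1:ℝ) ≤ (a 0 : ℕ) := by exact_mod_cast (a 0).one_le
    push_cast at *
    linarith
  have h1 : Tendsto (fun n => cnv a (n+1)) atTop (𝓝 (cfVal a)) :=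
    (tendsto_cnv a).comp (tendsto_add_atTop_nat 1)
  have h2 : Tendsto (fun n => 1 / ((a 0 : ℝ) + cnv (shf a) n)) atTop
      (𝓝 (1 / ((a 0 : ℝ) + cfVal (shf a)))) := by
    apply Tendsto.div tendsto_const_nhds (Tendsto.const_add _ (tendsto_cnv (shf a))) (ne_of_gt hpos)
  have : (fun n => cnv a (n+1)) = (fun n => 1 / ((a 0 : ℝ) + cnv (shf a) n)) := by
    funext n; exact cnv_shf a n
  rw [this] at h1
  exact tendsto_nhds_unique h1 h2

lemma cfVal_le_one (a : ℕ → ℕ+) : cfVal a ≤ 1 := by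
  have h := (cfVal_nonneg_le_one a).2
  have ha : (1:ℝ) ≤ (a 0 : ℝ) := by exact_mod_cast (a 0).one_le
  calc cfVal a ≤ 1/(a 0:ℝ) := h
    _ ≤ 1 := by rw [div_le_one (by linarith)]; exact ha

lemma cfVal_pos (a : ℕ → ℕ+) : 0 < cfVal a := by
  rw [cfVal_rec a]
  have h1 := (cfVal_nonneg_le_one (shf a)).1
  have ha : (1:ℝ) ≤ (a 0 : ℝ) := by exact_mod_cast (a 0).one_le
  positivity

lemma cfVal_lt_one (a : ℕ → ℕ+) : cfVal a < 1 := by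
  rw [cfVal_rec a]
  have h1 := cfVal_pos (shf a)
  have ha : (1:ℝ) ≤ (a 0 : ℝ) := by exact_mod_cast (a 0).one_le
  rw [div_lt_one (by linarith)]
  linarith

lemma cfVal_denpos (a : ℕ → ℕ+) : (0:ℝ) < (a 0 : ℝ) + cfVal (shf a) := by
  have h1 := cfVal_pos (shf a)
  have ha : (1:ℝ) ≤ (a 0 : ℝ) := by exact_mod_cast (a 0).one_le
  linarith

lemma cfVal_floor (a : ℕ → ℕ+) : ⌊(cfVal a)⁻¹⌋ = (a 0 : ℕ) := by
  have hrec := cfVal_rec a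
  have h1 := cfVal_pos (shf a)
  have h2 := cfVal_lt_one (shf a)
  have hd := cfVal_denpos a
  have hinv : (cfVal a)⁻¹ = (a 0 : ℝ) + cfVal (shf a) := by
    rw [hrec]; field_simp
  rw [hinv]
  rw [Int.floor_eq_iff]
  push_cast
  constructor <;> linarith

lemma cfVal_fract (a : ℕ → ℕ+) : Int.fract (cfVal a)⁻¹ = cfVal (shf a) := by
  rw [Int.fract, cfVal_floor]
  have hrec := cfVal_rec a
  have hd := cfVal_denpos a
  have hinv : (cfVal a)⁻¹ = (a 0 : ℝ) + cfVal (shf a) := by rw [hrec]; field_simp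
  rw [hinv]; push_cast; ring

lemma cfVal_injective : Function.Injective cfVal := by
  intro a b hab
  funext n
  induction n generalizing a b with
  | zero =>
    have h1 := cfVal_floor a
    have h2 := cfVal_floor b
    rw [hab] at h1
    have : ((a 0 : ℕ) : ℤ) = ((b 0 : ℕ) : ℤ) := h1.symm.trans h2
    exact PNat.coe_injective (by exact_mod_cast this)
  | succ n ih =>
    have h : cfVal (shf a) = cfVal (shf b) := by
      rw [← cfVal_fract a, ← cfVal_fract b, hab]
    exact ih h

lemma cfVal_irrational (a : ℕ → ℕ+) : Irrational (cfVal a) := by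
  -- descent on denominator
  have key : ∀ d : ℕ, ∀ c : ℤ, ∀ a : ℕ → ℕ+, cfVal a ≠ (c : ℝ) / (d : ℝ) := by
    intro d
    induction d using Nat.strong_induction_on with
    | _ d ih =>
      intro c a heq
      have hpos := cfVal_pos a
      have hlt := cfVal_lt_one a
      rcases Nat.eq_zero_or_pos d with hd0 | hd0
      · subst hd0; simp at heq; rw [heq] at hpos; simp at hpos
      have hdR : (0:ℝ) < (d:ℝ) := by exact_mod_cast hd0
      have hcR : (0:ℝ) < (c:ℝ) := by
        have h : (0:ℝ) < (c:ℝ)/(d:ℝ) := heq ▸ hpos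
        rw [div_pos_iff] at h
        rcases h with ⟨h, _⟩ | ⟨_, h⟩
        · exact h
        · linarith
      have hc : (0:ℤ) < c := by exact_mod_cast hcR
      have hcd : (c:ℝ) < (d:ℝ) := by
        rw [heq, div_lt_one hdR] at hlt; exact hlt
      have hcdZ : c < (d:ℤ) := by exact_mod_cast hcd
      -- cfVal (shf a) = (d - a0*c)/c
      have hfr := cfVal_fract a
      have hinv : (cfVal a)⁻¹ = (d:ℝ)/(c:ℝ) := by
        rw [heq, inv_div]
      have hflr := cfVal_floor a
      have : cfVal (shf a) = ((d - (a 0 : ℕ) * c : ℤ) : ℝ) / ((c.toNat : ℕ) : ℝ) := by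
        have hct : ((c.toNat:ℕ):ℝ) = (c:ℝ) := by norm_cast; exact Int.toNat_of_nonneg hc.le
        rw [hinv] at hflr
        rw [← hfr, Int.fract, hinv, hflr, hct]
        push_cast
        field_simp
      exact ih c.toNat (by omega) _ _ this
  rw [Irrational]
  rintro ⟨q, hq⟩
  exact key q.den q.num a (by rw [← hq]; exact_mod_cast (Rat.num_div_den q).symm)

/-- The set `I` of irrational numbers of `[0,1]`. -/
def Iirr : Set ℝ := {x | x ∈ Set.Icc (0:ℝ) 1 ∧ Irrational x}

lemma cfVal_mem_Iirr (a : ℕ → ℕ+) : cfVal a ∈ Iirr :=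
  ⟨⟨(cfVal_pos a).le, (cfVal_le_one a)⟩, cfVal_irrational a⟩

/-- Gauss iterates. -/
noncomputable def xi (x : ℝ) : ℕ → ℝ
  | 0 => x
  | (n+1) => Int.fract (xi x n)⁻¹

/-- Gauss partial quotients. -/
noncomputable def ga (x : ℝ) (n : ℕ) : ℕ+ := (⌊(xi x n)⁻¹⌋).toNat.toPNat'

lemma irrational_inv {x : ℝ} (hx : Irrational x) : Irrational x⁻¹ := by
  rintro ⟨q, hq⟩
  rcases eq_or_ne q 0 with h0 | h0
  · rw [h0] at hq
    simp at hq
    exact (hx ⟨0, by simp [hq]⟩)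
  · exact hx ⟨q⁻¹, by rw [← inv_inv x, ← hq]; push_cast; ring⟩

lemma xi_invariant {x : ℝ} (hx : Irrational x) (h0 : x ∈ Set.Ioo (0:ℝ) 1) :
    ∀ n, Irrational (xi x n) ∧ xi x n ∈ Set.Ioo (0:ℝ) 1 := by
  intro n
  induction n with
  | zero => exact ⟨hx, h0⟩
  | succ n ih =>
    obtain ⟨hirr, hmem⟩ := ih
    have hinv : Irrational (xi x n)⁻¹ := irrational_inv hirr
    have hfr : Irrational (Int.fract (xi x n)⁻¹) := by
      rw [Int.fract]
      exact hinv.sub_intCast _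
    refine ⟨hfr, ?_, ?_⟩
    · rcases lt_or_eq_of_le (Int.fract_nonneg (xi x n)⁻¹) with h | h
      · exact h
      · exact absurd ⟨(0:ℚ), by simpa using h⟩ hfr
    · exact Int.fract_lt_one _

lemma xi_inv_gt_one {x : ℝ} (hx : Irrational x) (h0 : x ∈ Set.Ioo (0:ℝ) 1) (n : ℕ) :
    1 < (xi x n)⁻¹ := by
  obtain ⟨_, hm⟩ := xi_invariant hx h0 n
  rw [lt_inv_comm₀ (by norm_num) hm.1]
  simpa using hm.2

lemma ga_eq_floor {x : ℝ} (hx : Irrational x) (h0 : x ∈ Set.Ioo (0:ℝ) 1) (n : ℕ) :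
    ((ga x n : ℕ) : ℤ) = ⌊(xi x n)⁻¹⌋ ∧ 1 ≤ ⌊(xi x n)⁻¹⌋ := by
  have h1 : 1 ≤ ⌊(xi x n)⁻¹⌋ := by
    rw [Int.le_floor]
    exact_mod_cast (xi_inv_gt_one hx h0 n).le
  constructor
  · rw [ga]
    rw [Nat.toPNat'_coe]
    rw [if_pos (by omega)]
    exact Int.toNat_of_nonneg (by omega)
  · exact h1

lemma xi_succ_eq {x : ℝ} (hx : Irrational x) (h0 : x ∈ Set.Ioo (0:ℝ) 1) (n : ℕ) :
    (xi x n)⁻¹ = ((ga x n : ℕ) : ℝ) + xi x (n+1) := by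
  have h := (ga_eq_floor hx h0 n).1
  have : xi x (n+1) = Int.fract (xi x n)⁻¹ := rfl
  rw [this, Int.fract]
  have : (((ga x n : ℕ) : ℤ) : ℝ) = ((ga x n : ℕ) : ℝ) := by push_cast; rfl
  rw [← this, h]
  ring

lemma xi_ne_zero {x : ℝ} (hx : Irrational x) (h0 : x ∈ Set.Ioo (0:ℝ) 1) (n : ℕ) :
    xi x n ≠ 0 := (xi_invariant hx h0 n).2.1.ne'

lemma gauss_identity {x : ℝ} (hx : Irrational x) (h0 : x ∈ Set.Ioo (0:ℝ) 1) :
    ∀ n, x * ((qden (ga x) (n+1) : ℝ) + xi x (n+1) * (qden (ga x) n : ℝ))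
       = (pnum (ga x) (n+1) : ℝ) + xi x (n+1) * (pnum (ga x) n : ℝ) := by
  intro n
  induction n with
  | zero =>
    have h := xi_succ_eq hx h0 0
    have hx0 : xi x 0 = x := rfl
    rw [hx0] at h
    simp only [qden, pnum]
    push_cast
    norm_num at h ⊢
    have hh : x * (((ga x 0 : ℕ) : ℝ) + xi x 1) = 1 := by
      rw [← h]; field_simp [h0.1.ne']
    linear_combination hh
  | succ n ih =>
    have h := xi_succ_eq hx h0 (n+1)
    have hne := xi_ne_zero hx h0 (n+1)
    have h1 : xi x (n+1) * (((ga x (n+1) : ℕ) : ℝ) + xi x (n+2)) = 1 := by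
      rw [← h]; field_simp [h0.1.ne']
    have eq : (qden (ga x) (n+2) : ℝ) = ((ga x (n+1) : ℕ) : ℝ) * (qden (ga x) (n+1) : ℝ) + (qden (ga x) n : ℝ) := by
      rw [show qden (ga x) (n+2) = (ga x (n+1) : ℕ) * qden (ga x) (n+1) + qden (ga x) n from rfl]
      push_cast; ring
    have ep : (pnum (ga x) (n+2) : ℝ) = ((ga x (n+1) : ℕ) : ℝ) * (pnum (ga x) (n+1) : ℝ) + (pnum (ga x) n : ℝ) := by
      rw [show pnum (ga x) (n+2) = (ga x (n+1) : ℕ) * pnum (ga x) (n+1) + pnum (ga x) n from rfl]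
      push_cast; ring
    rw [eq, ep]
    linear_combination (((ga x (n+1) : ℕ) : ℝ) + xi x (n+2)) * ih
      - (x * (qden (ga x) n : ℝ) - (pnum (ga x) n : ℝ)) * h1

lemma gauss_bound {x : ℝ} (hx : Irrational x) (h0 : x ∈ Set.Ioo (0:ℝ) 1) :
    ∀ n, |x * (qden (ga x) n : ℝ) - (pnum (ga x) n : ℝ)| ≤ 1 := by
  intro n
  induction n with
  | zero =>
    simp only [qden, pnum]
    push_cast
    rw [abs_of_nonneg (by simpa using h0.1.le)]
    simpa using h0.2.le
  | succ n ih =>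
    have key := gauss_identity hx h0 n
    have hmem := (xi_invariant hx h0 (n+1)).2
    have : x * (qden (ga x) (n+1) : ℝ) - (pnum (ga x) (n+1) : ℝ)
        = - (xi x (n+1)) * (x * (qden (ga x) n : ℝ) - (pnum (ga x) n : ℝ)) := by
      linear_combination key
    rw [this, abs_mul, abs_neg, abs_of_pos hmem.1]
    nlinarith [abs_nonneg (x * (qden (ga x) n : ℝ) - (pnum (ga x) n : ℝ)), hmem.2]

lemma gauss_tendsto {x : ℝ} (hx : Irrational x) (h0 : x ∈ Set.Ioo (0:ℝ) 1) :
    Tendsto (cnv (ga x)) atTop (𝓝 x) := by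
  rw [Metric.tendsto_atTop]
  intro ε hε
  obtain ⟨N, hN⟩ := exists_nat_gt (1/ε)
  refine ⟨N+1, fun n hn => ?_⟩
  have hq := qdenR_pos (ga x) n
  have hb := gauss_bound hx h0 n
  have hd : dist (cnv (ga x) n) x ≤ 1 / (qden (ga x) n : ℝ) := by
    rw [Real.dist_eq, cnv]
    rw [show (pnum (ga x) n : ℝ) / (qden (ga x) n : ℝ) - x
        = -((x * (qden (ga x) n : ℝ) - (pnum (ga x) n : ℝ)) / (qden (ga x) n : ℝ)) by field_simp; ring]
    rw [abs_neg, abs_div, abs_of_pos hq, div_le_div_iff₀ hq hq]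
    nlinarith
  have hqn : (n : ℝ) ≤ (qden (ga x) n : ℝ) := by exact_mod_cast le_qden (ga x) n
  have hNn : (N : ℝ) + 1 ≤ (n : ℝ) := by exact_mod_cast hn
  calc dist (cnv (ga x) n) x ≤ 1 / (qden (ga x) n : ℝ) := hd
    _ ≤ 1 / ((N:ℝ)+1) := by
        apply one_div_le_one_div_of_le (by positivity)
        linarith
    _ < ε := by
        rw [div_lt_iff₀ (by positivity)]
        rw [div_lt_iff₀ hε] at hN
        nlinarith

lemma cfVal_ga {x : ℝ} (hx : Irrational x) (h0 : x ∈ Set.Ioo (0:ℝ) 1) :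
    cfVal (ga x) = x :=
  tendsto_nhds_unique (tendsto_cnv (ga x)) (gauss_tendsto hx h0)

lemma mem_Ioo_of_Iirr {x : ℝ} (hx : x ∈ Iirr) : x ∈ Set.Ioo (0:ℝ) 1 := by
  obtain ⟨⟨h0, h1⟩, hirr⟩ := hx
  refine ⟨lt_of_le_of_ne h0 ?_, lt_of_le_of_ne h1 ?_⟩
  · rintro rfl; exact hirr ⟨0, by simp⟩
  · rintro rfl; exact hirr ⟨1, by simp⟩

lemma exists_cfVal {x : ℝ} (hx : x ∈ Iirr) : ∃ a : ℕ → ℕ+, cfVal a = x :=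
  ⟨ga x, cfVal_ga hx.2 (mem_Ioo_of_Iirr hx)⟩

/-- The (unique) sequence of partial quotients of `x`, when `x` has a continued
fraction expansion. -/
noncomputable def coeff (x : ℝ) : ℕ → ℕ+ := by
  classical
  exact if h : ∃ a : ℕ → ℕ+, cfVal a = x then h.choose else fun _ => 1

lemma cfVal_coeff {x : ℝ} (hx : x ∈ Iirr) : cfVal (coeff x) = x := by
  have h : ∃ a : ℕ → ℕ+, cfVal a = x := exists_cfVal hx
  unfold coeff
  rw [dif_pos h]
  exact h.choose_spec

lemma coeff_cfVal (a : ℕ → ℕ+) : coeff (cfVal a) = a :=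
  cfVal_injective (cfVal_coeff (cfVal_mem_Iirr a))

lemma coeff_eq_ga {x : ℝ} (hx : x ∈ Iirr) : coeff x = ga x :=
  cfVal_injective (by rw [cfVal_coeff hx, cfVal_ga hx.2 (mem_Ioo_of_Iirr hx)])

lemma pq_congr (a b : ℕ → ℕ+) : ∀ n, (∀ i, i < n → a i = b i) →
    pnum a n = pnum b n ∧ qden a n = qden b n := by
  intro n
  induction n using Nat.twoStepInduction with
  | zero => simp [pnum, qden]
  | one => intro h; simp [pnum, qden, h 0 (by omega)]
  | more n ih1 ih2 =>
    intro h
    obtain ⟨hp1, hq1⟩ := ih1 (fun i hi => h i (by omega))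
    obtain ⟨hp2, hq2⟩ := ih2 (fun i hi => h i (by omega))
    constructor
    · show (a (n+1) : ℕ) * pnum a (n+1) + pnum a n = (b (n+1) : ℕ) * pnum b (n+1) + pnum b n
      rw [hp1, hp2, h (n+1) (by omega)]
    · show (a (n+1) : ℕ) * qden a (n+1) + qden a n = (b (n+1) : ℕ) * qden b (n+1) + qden b n
      rw [hq1, hq2, h (n+1) (by omega)]

lemma continuous_cfVal : Continuous cfVal := by
  rw [continuous_iff_continuousAt]
  intro a
  rw [ContinuousAt, Metric.tendsto_nhds]
  intro ε hε
  obtain ⟨N, hN⟩ := exists_nat_gt (1/ε)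
  have hev : ∀ᶠ b in 𝓝 a, ∀ i ∈ Finset.range (N+1), b i = a i := by
    rw [eventually_all_finset]
    intro i _
    have : IsOpen {b : ℕ → ℕ+ | b i = a i} := by
      have : {b : ℕ → ℕ+ | b i = a i} = (fun b : ℕ → ℕ+ => b i) ⁻¹' {a i} := rfl
      rw [this]
      exact (isOpen_discrete _).preimage (continuous_apply i)
    exact this.mem_nhds rfl
  filter_upwards [hev] with b hb
  have hcong := pq_congr b a
  have hcN : cnv b N = cnv a N := by
    obtain ⟨hp, hq⟩ := hcong N (fun i hi => hb i (by simp; omega))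
    rw [cnv, cnv, hp, hq]
  have hcN1 : cnv b (N+1) = cnv a (N+1) := by
    obtain ⟨hp, hq⟩ := hcong (N+1) (fun i hi => hb i (by simp; omega))
    rw [cnv, cnv, hp, hq]
  have h1 : cfVal b ∈ Set.uIcc (cnv a N) (cnv a (N+1)) := by
    rw [← hcN, ← hcN1]; exact cfVal_mem_uIcc b N
  have h2 : cfVal a ∈ Set.uIcc (cnv a N) (cnv a (N+1)) := cfVal_mem_uIcc a N
  calc dist (cfVal b) (cfVal a) ≤ dist (cnv a N) (cnv a (N+1)) :=
        Real.dist_le_of_mem_uIcc h1 h2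
    _ = 1 / ((qden a N : ℝ) * qden a (N+1)) := dist_cnv_succ a N
    _ ≤ 1 / ((N:ℝ)+1) := one_div_qq_le a N
    _ < ε := by
        rw [div_lt_iff₀ (by positivity)]
        rw [div_lt_iff₀ hε] at hN
        nlinarith

lemma xi_irr_mem (y : {x : ℝ // x ∈ Iirr}) (n : ℕ) :
    Irrational (xi (y:ℝ) n) ∧ xi (y:ℝ) n ∈ Set.Ioo (0:ℝ) 1 :=
  xi_invariant y.2.2 (mem_Ioo_of_Iirr y.2) n

lemma ev_floor (n : ℕ) (hc : Continuous (fun y : {x : ℝ // x ∈ Iirr} => xi (y:ℝ) n))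
    (y0 : {x : ℝ // x ∈ Iirr}) :
    ∀ᶠ y : {x : ℝ // x ∈ Iirr} in 𝓝 y0, ⌊(xi (y:ℝ) n)⁻¹⌋ = ⌊(xi (y0:ℝ) n)⁻¹⌋ := by
  have hne := (xi_irr_mem y0 n).2.1.ne'
  have hgc : ContinuousAt (fun y : {x : ℝ // x ∈ Iirr} => (xi (y:ℝ) n)⁻¹) y0 :=
    hc.continuousAt.inv₀ hne
  set z := (xi (y0:ℝ) n)⁻¹ with hz
  have hzirr : Irrational z := irrational_inv (xi_irr_mem y0 n).1
  have hmem : z ∈ Set.Ioo ((⌊z⌋:ℝ)) ((⌊z⌋:ℝ)+1) := by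
    refine ⟨lt_of_le_of_ne (Int.floor_le z) ?_, Int.lt_floor_add_one z⟩
    intro h
    exact hzirr ⟨(⌊z⌋ : ℚ), by push_cast; rw [h]⟩
  have := hgc.eventually_mem (isOpen_Ioo.mem_nhds hmem)
  filter_upwards [this] with y hy
  rw [Int.floor_eq_iff]
  exact ⟨hy.1.le, by exact_mod_cast hy.2⟩

lemma continuous_xi : ∀ n, Continuous (fun y : {x : ℝ // x ∈ Iirr} => xi (y:ℝ) n) := by
  intro n
  induction n with
  | zero => exact continuous_subtype_val
  | succ n ih =>
    rw [continuous_iff_continuousAt]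
    intro y0
    have hev := ev_floor n ih y0
    have hgc : ContinuousAt (fun y : {x : ℝ // x ∈ Iirr} => (xi (y:ℝ) n)⁻¹) y0 :=
      ih.continuousAt.inv₀ (xi_irr_mem y0 n).2.1.ne'
    have : ContinuousAt (fun y : {x : ℝ // x ∈ Iirr} =>
        (xi (y:ℝ) n)⁻¹ - ((⌊(xi (y0:ℝ) n)⁻¹⌋ : ℤ) : ℝ)) y0 := hgc.sub continuousAt_const
    apply this.congr
    filter_upwards [hev] with y hy
    show (xi (y:ℝ) n)⁻¹ - _ = xi (y:ℝ) (n+1)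
    rw [show xi (y:ℝ) (n+1) = Int.fract (xi (y:ℝ) n)⁻¹ from rfl, Int.fract, hy]

lemma continuous_ga (n : ℕ) : Continuous (fun y : {x : ℝ // x ∈ Iirr} => ga (y:ℝ) n) := by
  rw [continuous_iff_continuousAt]
  intro y0
  have hev := ev_floor n (continuous_xi n) y0
  apply continuousAt_const.congr (f := fun _ => ga (y0:ℝ) n)
  filter_upwards [hev] with y hy
  show ga (y0:ℝ) n = ga (y:ℝ) n
  rw [ga, ga, hy]

/-- First component of Cantor's bijection: `f₁([a_1,a_2,…]) = [a_1,a_3,a_5,…]`. -/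
noncomputable def cantorF1 (x : ℝ) : ℝ := cfVal (fun j => coeff x (2*j))

/-- Second component of Cantor's bijection: `f₂([a_1,a_2,…]) = [a_2,a_4,a_6,…]`. -/
noncomputable def cantorF2 (x : ℝ) : ℝ := cfVal (fun j => coeff x (2*j+1))

noncomputable def cfHomeo : (ℕ → ℕ+) ≃ₜ {x : ℝ // x ∈ Iirr} where
  toFun a := ⟨cfVal a, cfVal_mem_Iirr a⟩
  invFun x := coeff (x : ℝ)
  left_inv a := coeff_cfVal a
  right_inv x := Subtype.ext (cfVal_coeff x.2)
  continuous_toFun := continuous_cfVal.subtype_mk _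
  continuous_invFun := by
    have : (fun x : {x : ℝ // x ∈ Iirr} => coeff (x : ℝ))
         = (fun x : {x : ℝ // x ∈ Iirr} => ga (x : ℝ)) := by
      funext x; exact coeff_eq_ga x.2
    show Continuous (fun x : {x : ℝ // x ∈ Iirr} => coeff (x : ℝ))
    rw [this]
    exact continuous_pi fun n => continuous_ga n

def splitHomeo : (ℕ → ℕ+) ≃ₜ (ℕ → ℕ+) × (ℕ → ℕ+) where
  toFun a := (fun j => a (2*j), fun j => a (2*j+1))
  invFun p := fun n => if n % 2 = 0 then p.1 (n/2) else p.2 (n/2)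
  left_inv a := by
    funext n
    show (if n % 2 = 0 then a (2*(n/2)) else a (2*(n/2)+1)) = a n
    by_cases h : n % 2 = 0
    · rw [if_pos h]; exact congrArg a (by omega)
    · rw [if_neg h]; exact congrArg a (by omega)
  right_inv p := by
    refine Prod.ext ?_ ?_
    · funext j
      show (if (2*j) % 2 = 0 then p.1 ((2*j)/2) else p.2 ((2*j)/2)) = p.1 j
      rw [if_pos (by omega)]; exact congrArg p.1 (by omega)
    · funext j
      show (if (2*j+1) % 2 = 0 then p.1 ((2*j+1)/2) else p.2 ((2*j+1)/2)) = p.2 j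
      rw [if_neg (by omega)]; exact congrArg p.2 (by omega)
  continuous_toFun := by
    refine Continuous.prodMk ?_ ?_ <;>
      exact continuous_pi fun j => continuous_apply _
  continuous_invFun := by
    refine continuous_pi fun n => ?_
    by_cases h : n % 2 = 0
    · simp only [if_pos h]
      exact (continuous_apply (n/2)).comp continuous_fst
    · simp only [if_neg h]
      exact (continuous_apply (n/2)).comp continuous_snd

/-- Cantor's bijection `f = (f₁, f₂)` is a homeomorphism from `I` onto `I²`. -/
theorem cantor_bijection_homeomorph :
    ∃ e : {x : ℝ // x ∈ Iirr} ≃ₜ ({x : ℝ // x ∈ Iirr} × {x : ℝ // x ∈ Iirr}),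
      ∀ x : {x : ℝ // x ∈ Iirr},
        ((e x).1 : ℝ) = cantorF1 (x : ℝ) ∧ ((e x).2 : ℝ) = cantorF2 (x : ℝ) := by
  refine ⟨cfHomeo.symm.trans (splitHomeo.trans (cfHomeo.prodCongr cfHomeo)), fun x => ⟨?_, ?_⟩⟩ <;> rfl
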